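/- arXiv:math/9707235 — 3 statements merged into one kernel-verified Lean document; each statement's English description precedes it below -/
import Mathlib

section
/- Let p be an odd prime, N ≥ 1, k ≥ 2 integers, and let N_k = min(N, 1 + v_p(k−1)). For every polynomial P ∈ ℤ_p[X] with P(p) ≡ 0 (mod p^N), one has P((1+p)^k − 1) ≡ 0 (mod p^{N_k}). -/
/-- Let `p` be an odd prime, `N ≥ 1`, `k ≥ 2`, and `N_k = min(N, 1 + v_p(k-1))`.
For every polynomial `P ∈ ℤ_p[X]` with `P(p) ≡ 0 (mod p^N)`, one has
`P((1+p)^k - 1) ≡ 0 (mod p^{N_k})`. -/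
theorem padic_poly_congruence (p N k : ℕ) [Fact p.Prime] (hp : Odd p)
    (hN : 1 ≤ N) (hk : 2 ≤ k) (P : Polynomial ℤ_[p])
    (hP : (p : ℤ_[p]) ^ N ∣ P.eval (p : ℤ_[p])) :
    (p : ℤ_[p]) ^ (min N (1 + padicValNat p (k - 1))) ∣
      P.eval ((1 + (p : ℤ_[p])) ^ k - 1) := by
  have hp' : p.Prime := Fact.out
  set m := k - 1 with hm
  have hm1 : 0 < m := by omega
  set v := padicValNat p m with hv
  -- Lifting the exponent in ℤ
  have key : (p : ℤ) ^ (1 + v) ∣ ((1 + (p : ℤ)) ^ m - 1) := by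
    apply pow_dvd_of_le_emultiplicity
    have hdvd : (p : ℤ) ∣ (1 + (p : ℤ)) - 1 := by simp
    have hnd : ¬ (p : ℤ) ∣ (1 + (p : ℤ)) := by
      intro h
      have : (p : ℤ) ∣ 1 := (dvd_add_right (dvd_refl _)).mp (by simpa [add_comm] using h)
      exact hp'.one_lt.ne' (by exact_mod_cast Int.eq_one_of_dvd_one (by positivity) this)
    have h := Int.emultiplicity_pow_sub_pow hp' hp hdvd hnd m
    rw [one_pow] at h
    rw [h]
    have h1 : (1 : ℕ∞) ≤ emultiplicity ((p : ℤ)) ((1 + (p : ℤ)) - 1) := by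
      apply le_emultiplicity_of_pow_dvd
      simpa using hdvd
    have h2 : (v : ℕ∞) ≤ emultiplicity p m := by
      rw [← padicValNat_eq_emultiplicity hm1.ne']
    calc ((1 + v : ℕ) : ℕ∞) = (1 : ℕ∞) + (v : ℕ∞) := by push_cast; rfl
      _ ≤ _ := add_le_add h1 h2
  -- transfer to ℤ_[p]
  have key2 : (p : ℤ_[p]) ^ (1 + v) ∣ ((1 + (p : ℤ_[p])) ^ m - 1) := by
    have := map_dvd (Int.castRingHom ℤ_[p]) key
    simpa using this
  have key3 : (p : ℤ_[p]) ^ (1 + v) ∣ ((1 + (p : ℤ_[p])) ^ k - 1 - p) := by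
    have hk' : k = m + 1 := by omega
    have : ((1 + (p : ℤ_[p])) ^ k - 1 - p) = (1 + p) * ((1 + (p : ℤ_[p])) ^ m - 1) := by
      rw [hk']; ring
    rw [this]
    exact Dvd.dvd.mul_left key2 _
  have hmin1 : min N (1 + v) ≤ 1 + v := min_le_right _ _
  have hmin2 : min N (1 + v) ≤ N := min_le_left _ _
  have hdvd1 : (p : ℤ_[p]) ^ (min N (1 + v)) ∣
      P.eval ((1 + (p : ℤ_[p])) ^ k - 1) - P.eval (p : ℤ_[p]) :=
    dvd_trans (dvd_trans (pow_dvd_pow _ hmin1) key3) (Polynomial.sub_dvd_eval_sub _ _ _)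
  have hdvd2 : (p : ℤ_[p]) ^ (min N (1 + v)) ∣ P.eval (p : ℤ_[p]) :=
    dvd_trans (pow_dvd_pow _ hmin2) hP
  have := dvd_add hdvd1 hdvd2
  simpa using this
end

section
/- Let p be an odd prime, N ≥ 1, k ≥ 2, and N_k = min(N, 1 + v_p(k−1)). There exists a polynomial P ∈ ℤ_p[X] of degree at most N with P(p) ≡ 0 (mod p^N) but P((1+p)^k − 1) ≢ 0 (mod p^{N_k + 1}). -/
open Polynomial

private lemma not_dvd_one_add (p : ℕ) [hf : Fact p.Prime] : ¬ (p : ℤ) ∣ (1 + (p : ℤ)) := by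
  intro h
  have h1 : (p : ℤ) ∣ 1 := (dvd_add_right (dvd_refl _)).mp (by rwa [add_comm] at h)
  have := Int.le_of_dvd one_pos h1
  have := hf.out.two_le
  omega

private lemma key_emult (p : ℕ) [hf : Fact p.Prime] (hp : Odd p) {m : ℕ} (hm : 0 < m) :
    emultiplicity (p : ℤ) ((1 + (p : ℤ)) ^ m - 1) = (1 + padicValNat p m : ℕ) := by
  have hxy : (p : ℤ) ∣ (1 + (p : ℤ)) - 1 := by simp
  have h1 : ((1 : ℤ)) ^ m = 1 := one_pow m
  have hlte := Int.emultiplicity_pow_sub_pow hf.out hp hxy (not_dvd_one_add p) m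
  rw [h1] at hlte
  rw [hlte]
  have h2 : (1 + (p : ℤ)) - 1 = (p : ℤ) := by ring
  rw [h2]
  have h3 : emultiplicity ((p : ℕ) : ℤ) ((p : ℕ) : ℤ) = emultiplicity p p :=
    Int.natCast_emultiplicity p p
  rw [h3, Nat.Prime.emultiplicity_self hf.out, ← padicValNat_eq_emultiplicity hm.ne']
  push_cast
  ring

private lemma not_dvd_of_emult (p : ℕ) [hf : Fact p.Prime] {z : ℤ} {n c : ℕ}
    (h : emultiplicity (p : ℤ) z = (n : ℕ)) (hc : n < c) : ¬ (p : ℤ) ^ c ∣ z := by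
  apply emultiplicity_lt_iff_not_dvd.mp
  rw [h]
  exact_mod_cast hc

/-- Let `p` be an odd prime, `N ≥ 1`, `k ≥ 2`, and `N_k = min(N, 1 + v_p(k-1))`.
There exists a polynomial `P ∈ ℤ_p[X]` of degree at most `N` with `P(p) ≡ 0 (mod p^N)`
but `P((1+p)^k - 1) ≢ 0 (mod p^{N_k + 1})`. -/
theorem padic_poly_sharp (p N k : ℕ) [Fact p.Prime] (hp : Odd p)
    (hN : 1 ≤ N) (hk : 2 ≤ k) :
    ∃ P : Polynomial ℤ_[p], P.natDegree ≤ N ∧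
      (p : ℤ_[p]) ^ N ∣ P.eval (p : ℤ_[p]) ∧
      ¬ (p : ℤ_[p]) ^ (min N (1 + padicValNat p (k - 1)) + 1) ∣
          P.eval ((1 + (p : ℤ_[p])) ^ k - 1) := by
  have hfp : Fact p.Prime := inferInstance
  set v := padicValNat p (k - 1) with hv
  have hk1 : 0 < k - 1 := by omega
  rcases le_or_gt (1 + v) N with hcase | hcase
  · -- Case A: N_k = 1 + v, take P = X - C p
    refine ⟨X - C (p : ℤ_[p]), ?_, ?_, ?_⟩
    · calc (X - C ((p : ℕ) : ℤ_[p])).natDegree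
          ≤ max X.natDegree (C ((p : ℕ) : ℤ_[p])).natDegree := natDegree_sub_le _ _
        _ ≤ N := by
            simp only [Polynomial.natDegree_X, Polynomial.natDegree_C]
            omega
    · simp
    · rw [min_eq_right hcase]
      have heval : (X - C ((p : ℕ) : ℤ_[p])).eval ((1 + (p : ℤ_[p])) ^ k - 1)
          = (((1 + (p : ℤ)) ^ k - 1 - p : ℤ) : ℤ_[p]) := by
        push_cast
        simp [sub_sub]
      rw [heval, PadicInt.pow_p_dvd_int_iff]
      have hfac : (1 + (p : ℤ)) ^ k - 1 - p = (1 + p) * ((1 + (p : ℤ)) ^ (k - 1) - 1) := by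
        conv_lhs => rw [show k = (k - 1) + 1 by omega]
        ring
      rw [hfac]
      intro hdvd
      have hprime : Prime (p : ℤ) := Nat.prime_iff_prime_int.mp hfp.out
      have := hprime.pow_dvd_of_dvd_mul_left _ (not_dvd_one_add p) hdvd
      refine absurd this (not_dvd_of_emult p (key_emult p hp hk1) ?_)
      omega
  · -- Case B: N_k = N, take P = p^(N-1) * X
    refine ⟨C ((p : ℤ_[p]) ^ (N - 1)) * X, ?_, ?_, ?_⟩
    · calc (C ((p : ℤ_[p]) ^ (N - 1)) * X).natDegree
          ≤ (C ((p : ℤ_[p]) ^ (N - 1))).natDegree + X.natDegree := natDegree_mul_le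
        _ ≤ N := by
            simp only [Polynomial.natDegree_X, Polynomial.natDegree_C]
            omega
    · have : (C ((p : ℤ_[p]) ^ (N - 1)) * X).eval ((p : ℕ) : ℤ_[p]) = (p : ℤ_[p]) ^ N := by
        simp only [eval_mul, eval_C, eval_X]
        rw [← pow_succ, show N - 1 + 1 = N by omega]
      rw [this]
    · rw [min_eq_left (by omega)]
      have heval : (C ((p : ℤ_[p]) ^ (N - 1)) * X).eval ((1 + (p : ℤ_[p])) ^ k - 1)
          = (((p : ℤ) ^ (N - 1) * ((1 + (p : ℤ)) ^ k - 1) : ℤ) : ℤ_[p]) := by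
        push_cast
        simp
      rw [heval, PadicInt.pow_p_dvd_int_iff]
      intro hdvd
      rw [show N + 1 = (N - 1) + 2 by omega, pow_add] at hdvd
      have hne : ((p : ℤ)) ^ (N - 1) ≠ 0 := pow_ne_zero _ (by exact_mod_cast hfp.out.pos.ne')
      rw [mul_dvd_mul_iff_left hne] at hdvd
      -- p ∤ k since p ∣ k - 1
      have hpdvd : p ∣ k - 1 := dvd_of_one_le_padicValNat (by omega)
      have hnk : ¬ p ∣ k := by
        intro h
        have := Nat.dvd_sub h hpdvd
        rw [show k - (k - 1) = 1 by omega] at this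
        have h1 := Nat.dvd_one.mp this
        have := hfp.out.two_le
        omega
      have hval : padicValNat p k = 0 := padicValNat.eq_zero_of_not_dvd hnk
      have hem := key_emult p hp (show 0 < k by omega)
      rw [hval] at hem
      refine absurd hdvd (not_dvd_of_emult p hem ?_)
      omega
end

section
/- Let p be an odd prime, K = ℚ_p(ζ_p) with ζ_p a primitive p-th root of unity, Δ = Gal(K/ℚ_p) ≅ (ℤ/p)^× with cyclotomic character ω. For 1 ≤ t ≤ p−2, the Gauss sum G(t) = (1/(p−1)) Σ_{σ∈Δ} ω^{−t}(σ) ζ_p^σ (where ω^{-t}(σ) is lifted to ℤ_p via Teichmüller) satisfies v_𝔓(G(t)) = t, where 𝔓 = (ζ_p − 1) is the maximal ideal of the ring of integers of K and v_𝔓 is the normalized valuation with v_𝔓(ζ_p − 1) = 1. -/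
open Polynomial in
theorem aux_cyclotomic_irreducible_padic (p : ℕ) [hp : Fact p.Prime] :
    Irreducible (cyclotomic p ℚ_[p]) := by
  have hZ : Irreducible (cyclotomic p ℤ_[p]) := by
    have heisZ := cyclotomic_comp_X_add_one_isEisensteinAt p
    have hmap : ((cyclotomic p ℤ_[p]).comp (X + 1)) =
        Polynomial.map (Int.castRingHom ℤ_[p]) ((cyclotomic p ℤ).comp (X + 1)) := by
      rw [Polynomial.map_comp, map_cyclotomic]
      simp
    have hmonic : ((cyclotomic p ℤ_[p]).comp (X + 1)).Monic := by
      have : (X + 1 : ℤ_[p][X]) = X + C 1 := by simp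
      rw [this]
      exact (cyclotomic.monic p ℤ_[p]).comp (monic_X_add_C 1)
        (by rw [natDegree_X_add_C]; exact one_ne_zero)
    have hdeg : ((cyclotomic p ℤ_[p]).comp (X + 1)).natDegree = p - 1 := by
      have : (X + 1 : ℤ_[p][X]) = X + C 1 := by simp
      rw [this, natDegree_comp, natDegree_X_add_C, natDegree_cyclotomic,
        Nat.totient_prime hp.out, mul_one]
    have heis : ((cyclotomic p ℤ_[p]).comp (X + 1)).IsEisensteinAt
        (Ideal.span {(p : ℤ_[p])}) := by
      constructor
      · rw [hmonic.leadingCoeff, Ideal.mem_span_singleton]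
        intro h
        exact PadicInt.prime_p.not_unit (isUnit_of_dvd_one h)
      · intro n hn
        rw [hmap, coeff_map, Ideal.mem_span_singleton]
        have hn' : n < ((cyclotomic p ℤ).comp (X + 1)).natDegree := by
          rw [hmap, natDegree_map_eq_of_injective] at hn
          · exact hn
          · exact (Int.castRingHom ℤ_[p]).injective_int
        have h2 := heisZ.mem hn'
        rw [Submodule.mem_span_singleton] at h2
        obtain ⟨c, hc⟩ := h2
        rw [zsmul_eq_mul, mul_comm] at hc
        exact ⟨(c : ℤ_[p]), by rw [← hc]; rw [map_mul]; norm_num⟩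
      · rw [Ideal.span_singleton_pow, Ideal.mem_span_singleton]
        have h0 : ((cyclotomic p ℤ_[p]).comp (X + 1)).coeff 0 = (p : ℤ_[p]) := by
          rw [coeff_zero_eq_eval_zero, eval_comp]
          simp [eval_one_cyclotomic_prime]
        rw [h0]
        intro h
        have hpne : (p : ℤ_[p]) ≠ 0 := by
          exact_mod_cast Nat.cast_ne_zero.mpr hp.out.ne_zero
        rw [pow_two] at h
        have h' : (p : ℤ_[p]) * (p : ℤ_[p]) ∣ (p : ℤ_[p]) * 1 := by simpa [mul_one] using h
        have := (mul_dvd_mul_iff_left hpne).mp h'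
        exact PadicInt.prime_p.not_unit (isUnit_of_dvd_one this)
    have hirr : Irreducible ((cyclotomic p ℤ_[p]).comp (X + 1)) := by
      refine heis.irreducible ?_ hmonic.isPrimitive ?_
      · exact (Ideal.span_singleton_prime (by exact_mod_cast hp.out.ne_zero)).2 PadicInt.prime_p
      · rw [hdeg]
        have := hp.out.two_le
        omega
    have : (X + 1 : ℤ_[p][X]) = X + C 1 := by simp
    rw [this] at hirr
    refine (MulEquiv.irreducible_iff (f := algEquivAevalXAddC (1 : ℤ_[p]))
      (x := cyclotomic p ℤ_[p])).mp ?_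
    show Irreducible (aeval (X + C (1:ℤ_[p])) (cyclotomic p ℤ_[p]))
    rwa [← comp_eq_aeval]
  rw [← map_cyclotomic p (algebraMap ℤ_[p] ℚ_[p])]
  exact (cyclotomic.monic p ℤ_[p]).irreducible_iff_irreducible_map_fraction_map.mp hZ

open Polynomial Finset in
theorem aux_char_sum (p : ℕ) [hp : Fact p.Prime] (t k : ℕ) (ht2 : t ≤ p - 2) (hk : k ≤ t) :
    (k.factorial : ZMod p) *
      ∑ b : (ZMod p)ˣ, ((b⁻¹ : (ZMod p)ˣ) : ZMod p) ^ t * ((b : ZMod p).val.choose k : ZMod p)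
      = if k = t then -1 else 0 := by
  obtain ⟨m, rfl⟩ : ∃ m, p = m + 2 := ⟨p - 2, by have := hp.out.two_le; omega⟩
  set p := m + 2
  have hbinv : ∀ b : (ZMod p)ˣ, b⁻¹ = b ^ m := by
    intro b
    refine inv_eq_of_mul_eq_one_right ?_
    have h := ZMod.units_pow_card_sub_one_eq_one p b
    calc b * b ^ m = b ^ (m + 1) := by rw [pow_succ, mul_comm]
    _ = 1 := h
  -- rewrite each summand via descPochhammer
  rw [Finset.mul_sum]
  have hstep : ∀ b : (ZMod p)ˣ,
      (k.factorial : ZMod p) * (((b⁻¹ : (ZMod p)ˣ) : ZMod p) ^ t * ((b : ZMod p).val.choose k : ZMod p))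
      = ∑ j ∈ Finset.range (k + 1),
          (descPochhammer (ZMod p) k).coeff j * ((b ^ (m * t + j) : (ZMod p)ˣ) : ZMod p) := by
    intro b
    have h1 : (k.factorial : ZMod p) * ((b : ZMod p).val.choose k : ZMod p)
        = ((b : ZMod p).val.descFactorial k : ZMod p) := by
      rw [Nat.descFactorial_eq_factorial_mul_choose]
      push_cast
      ring
    have h2 : ((b : ZMod p).val.descFactorial k : ZMod p)
        = (descPochhammer (ZMod p) k).eval ((b : ZMod p)) := by
      rw [← descPochhammer_eval_eq_descFactorial]
      congr 1
      rw [ZMod.natCast_val, ZMod.cast_id]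
    have h3 : (descPochhammer (ZMod p) k).eval ((b : ZMod p))
        = ∑ j ∈ Finset.range (k + 1), (descPochhammer (ZMod p) k).coeff j * (b : ZMod p) ^ j := by
      rw [Polynomial.eval_eq_sum_range' (n := k + 1) (by rw [descPochhammer_natDegree]; omega)]
    calc (k.factorial : ZMod p) * (((b⁻¹ : (ZMod p)ˣ) : ZMod p) ^ t * ((b : ZMod p).val.choose k : ZMod p))
        = ((b⁻¹ : (ZMod p)ˣ) : ZMod p) ^ t *
            ((k.factorial : ZMod p) * ((b : ZMod p).val.choose k : ZMod p)) := by ring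
      _ = ((b⁻¹ : (ZMod p)ˣ) : ZMod p) ^ t *
            ∑ j ∈ Finset.range (k + 1), (descPochhammer (ZMod p) k).coeff j * (b : ZMod p) ^ j := by
          rw [h1, h2, h3]
      _ = ∑ j ∈ Finset.range (k + 1),
            (descPochhammer (ZMod p) k).coeff j * ((b ^ (m * t + j) : (ZMod p)ˣ) : ZMod p) := by
          rw [Finset.mul_sum]
          refine Finset.sum_congr rfl fun j _ => ?_
          rw [hbinv]
          simp only [Units.val_pow_eq_pow_val, ← pow_mul, ← pow_add]
          ring
  simp_rw [hstep]
  rw [Finset.sum_comm]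
  have hsum : ∀ j, ∑ b : (ZMod p)ˣ, ((b ^ (m * t + j) : (ZMod p)ˣ) : ZMod p)
      = if (p - 1) ∣ (m * t + j) then -1 else 0 := by
    intro j
    classical
    have := FiniteField.sum_pow_units (ZMod p) (m * t + j)
    rw [ZMod.card] at this
    simp_rw [Units.val_pow_eq_pow_val]
    exact this
  have hdvd : ∀ j, j ≤ t → ((p - 1) ∣ (m * t + j) ↔ j = t) := by
    intro j hj
    have hp1 : p - 1 = m + 1 := by omega
    rw [hp1]
    constructor
    · intro h
      have h' : ((m : ℤ) + 1) ∣ ((m : ℤ) * t + j) := by exact_mod_cast h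
      have h2 : ((m : ℤ) + 1) ∣ ((j : ℤ) - t) := by
        have h3 : ((m : ℤ) + 1) ∣ (m + 1) * t := Dvd.intro t rfl
        have := dvd_sub h' h3
        have he : (m : ℤ) * t + j - (m + 1) * t = (j : ℤ) - t := by ring
        rwa [he] at this
      have h4 : ((j : ℤ) - t).natAbs < ((m : ℤ) + 1).natAbs := by
        have h5 : ((j : ℤ) - t).natAbs = t - j := by omega
        have h6 : ((m : ℤ) + 1).natAbs = m + 1 := by omega
        omega
      have := Int.eq_zero_of_dvd_of_natAbs_lt_natAbs h2 h4
      omega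
    · rintro rfl
      exact ⟨j, by ring⟩
  have hterm : ∀ j ∈ Finset.range (k + 1),
      (∑ b : (ZMod p)ˣ, (descPochhammer (ZMod p) k).coeff j * ((b ^ (m * t + j) : (ZMod p)ˣ) : ZMod p))
      = if j = t then -((descPochhammer (ZMod p) k).coeff j) else 0 := by
    intro j hj
    simp only [Finset.mem_range] at hj
    have hjt' : j ≤ t := by omega
    rw [← Finset.mul_sum, hsum j]
    by_cases hjt : j = t
    · rw [if_pos ((hdvd j hjt').mpr hjt), if_pos hjt]; ring
    · rw [if_neg (fun h => hjt ((hdvd j hjt').mp h)), if_neg hjt, mul_zero]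
  rw [Finset.sum_congr rfl hterm]
  by_cases hkt : k = t
  · subst hkt
    rw [Finset.sum_ite_eq' (Finset.range (k+1)) k
      (fun j => -((descPochhammer (ZMod p) k).coeff j))]
    have hc : (descPochhammer (ZMod p) k).coeff k = 1 := by
      have hm := monic_descPochhammer (ZMod p) k
      have := hm.coeff_natDegree
      rwa [descPochhammer_natDegree] at this
    rw [if_pos (Finset.mem_range.mpr (by omega)), hc, if_pos rfl]
  · rw [if_neg hkt]
    apply Finset.sum_eq_zero
    intro j hj
    simp only [Finset.mem_range] at hj
    rw [if_neg (by omega)]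

open Polynomial Finset in
/-- Gauss sum valuation: let `p` be an odd prime, `K = ℚ_p(ζ_p)` with its (unique) norm
extending that of `ℚ_p`, `Δ = Gal(K/ℚ_p)` with Teichmüller/cyclotomic character `ω`.
For `1 ≤ t ≤ p-2`, the Gauss sum `G(t) = (1/(p-1)) ∑_{σ∈Δ} ω^{-t}(σ) ζ_p^σ` has
`𝔓`-adic valuation `t`, i.e. `‖G(t)‖ = ‖ζ_p - 1‖^t`. -/
theorem gauss_sum_valuation (p : ℕ) [Fact p.Prime] (hp : Odd p)
    (K : Type*) [NormedField K] [Algebra ℚ_[p] K] [FiniteDimensional ℚ_[p] K]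
    (hiso : ∀ x : ℚ_[p], ‖algebraMap ℚ_[p] K x‖ = ‖x‖)
    (hcyc : IsCyclotomicExtension {p} ℚ_[p] K)
    (ζ : K) (hζ : IsPrimitiveRoot ζ p)
    (ω : (K ≃ₐ[ℚ_[p]] K) →* ℤ_[p]ˣ)
    (hω : ∀ σ : K ≃ₐ[ℚ_[p]] K, σ ζ = ζ ^ (PadicInt.toZMod ((ω σ : ℤ_[p]ˣ) : ℤ_[p])).val)
    (t : ℕ) (ht1 : 1 ≤ t) (ht2 : t ≤ p - 2) :
    ‖((p : K) - 1)⁻¹ * ∑ σ : K ≃ₐ[ℚ_[p]] K,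
        algebraMap ℚ_[p] K (((((ω σ)⁻¹ : ℤ_[p]ˣ) : ℤ_[p]) : ℚ_[p]) ^ t) * σ ζ‖
      = ‖ζ - 1‖ ^ t := by
  haveI := hcyc
  have hpp : p.Prime := Fact.out
  have hp2 : 2 ≤ p := hpp.two_le
  have hp3 : 3 ≤ p := by
    rcases hp with ⟨n, hn⟩
    rcases Nat.lt_or_ge p 3 with h | h
    · interval_cases p <;> omega
    · exact h
  haveI : NeZero p := ⟨hpp.ne_zero⟩
  -- K is ultrametric
  haveI hUK : IsUltrametricDist K := by
    apply IsUltrametricDist.isUltrametricDist_of_forall_norm_natCast_le_one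
    intro n
    rw [← map_natCast (algebraMap ℚ_[p] K) n, hiso]
    have := Padic.norm_int_le_one (p := p) (n : ℤ)
    simpa using this
  -- basic norm facts
  have hnormζ : ‖ζ‖ = 1 := by
    have h1 : ‖ζ‖ ^ p = 1 := by
      rw [← norm_pow, hζ.pow_eq_one, norm_one]
    rcases lt_trichotomy ‖ζ‖ 1 with h | h | h
    · exfalso
      have := pow_lt_one₀ (norm_nonneg ζ) h hpp.ne_zero
      rw [h1] at this; exact lt_irrefl _ this
    · exact h
    · exfalso
      have := one_lt_pow₀ h hpp.ne_zero
      rw [h1] at this; exact lt_irrefl _ this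
  have hζ1 : ζ ≠ 1 := hζ.ne_one (by omega)
  have hπ0 : ζ - 1 ≠ 0 := sub_ne_zero.mpr hζ1
  have hπpos : 0 < ‖ζ - 1‖ := norm_pos_iff.mpr hπ0
  have hp_norm : ‖(p : K)‖ = (p : ℝ)⁻¹ := by
    rw [← map_natCast (algebraMap ℚ_[p] K) p, hiso]
    exact Padic.norm_p
  -- ‖ζ - 1‖ ^ (p - 1) = p⁻¹
  have hsub : ∀ (x : K), ‖x‖ = 1 → ∀ i : ℕ, ‖x ^ i - 1‖ ≤ ‖x - 1‖ := by
    intro x hx i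
    rw [← geom_sum_mul, norm_mul]
    have hb : ‖∑ j ∈ Finset.range i, x ^ j‖ ≤ 1 := by
      apply IsUltrametricDist.norm_sum_le_of_forall_le_of_nonneg zero_le_one
      intro j _
      rw [norm_pow, hx, one_pow]
    calc ‖∑ j ∈ Finset.range i, x ^ j‖ * ‖x - 1‖ ≤ 1 * ‖x - 1‖ := by
          exact mul_le_mul_of_nonneg_right hb (norm_nonneg _)
      _ = ‖x - 1‖ := one_mul _
  have hππ : ‖ζ - 1‖ ^ (p - 1) = (p : ℝ)⁻¹ := by
    have hroot : ∀ μ ∈ primitiveRoots p K, ‖1 - μ‖ = ‖ζ - 1‖ := by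
      intro μ hμmem
      have hμ : IsPrimitiveRoot μ p := (mem_primitiveRoots hpp.pos).mp hμmem
      obtain ⟨i, hi, rfl⟩ := hζ.eq_pow_of_pow_eq_one hμ.pow_eq_one
      obtain ⟨j, hj, hji⟩ := hμ.eq_pow_of_pow_eq_one hζ.pow_eq_one
      rw [norm_sub_rev]
      refine le_antisymm (hsub ζ hnormζ i) ?_
      calc ‖ζ - 1‖ = ‖(ζ ^ i) ^ j - 1‖ := by rw [hji]
        _ ≤ ‖ζ ^ i - 1‖ := hsub (ζ ^ i) (by rw [norm_pow, hnormζ, one_pow]) j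
    have hcard : (primitiveRoots p K).card = p - 1 := by
      rw [hζ.card_primitiveRoots, Nat.totient_prime hpp]
    have hprod : (p : K) = ∏ μ ∈ primitiveRoots p K, (1 - μ) := by
      have h1 := eval_one_cyclotomic_prime (R := K) (p := p)
      rw [cyclotomic_eq_prod_X_sub_primitiveRoots hζ, eval_prod] at h1
      rw [← h1]
      refine Finset.prod_congr rfl fun μ _ => ?_
      simp
    have h2 : (p : ℝ)⁻¹ = ∏ μ ∈ primitiveRoots p K, ‖1 - μ‖ := by
      rw [← hp_norm, hprod, norm_prod]
    rw [Finset.prod_congr rfl hroot, Finset.prod_const, hcard] at h2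
    exact h2.symm
  have hπlt : ‖ζ - 1‖ < 1 := by
    by_contra h
    push_neg at h
    have h1 : (1:ℝ) ≤ ‖ζ - 1‖ ^ (p - 1) := one_le_pow₀ h
    rw [hππ] at h1
    have : (1:ℝ) < p := by exact_mod_cast (by omega : 1 < p)
    have := inv_lt_one_of_one_lt₀ this
    linarith
  -- Galois group bijection with (ZMod p)ˣ
  have hζ' : IsPrimitiveRoot ζ p := hζ
  have hirr : Irreducible (cyclotomic p ℚ_[p]) :=
    aux_cyclotomic_irreducible_padic p
  let e := IsCyclotomicExtension.autEquivPow K hirr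
  let m : (K ≃ₐ[ℚ_[p]] K) → (ZMod p)ˣ :=
    fun σ => Units.map (PadicInt.toZMod (p := p)).toMonoidHom (ω σ)
  have hmbij : Function.Bijective m := by
    have hminj : Function.Injective m := by
      intro σ τ h
      have hval : (PadicInt.toZMod ((ω σ : ℤ_[p]ˣ) : ℤ_[p])).val
          = (PadicInt.toZMod ((ω τ : ℤ_[p]ˣ) : ℤ_[p])).val := by
        have h2 : (PadicInt.toZMod ((ω σ : ℤ_[p]ˣ) : ℤ_[p]))
            = (PadicInt.toZMod ((ω τ : ℤ_[p]ˣ) : ℤ_[p])) := congrArg Units.val h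
        rw [h2]
      have hσζ : σ ζ = τ ζ := by
        rw [hω σ, hω τ]
        exact congrArg (fun n => ζ ^ n) hval
      apply AlgEquiv.coe_algHom_injective
      apply (hζ'.powerBasis ℚ_[p]).algHom_ext
      rw [hζ'.powerBasis_gen ℚ_[p]]
      exact hσζ
    have hcard : Fintype.card (K ≃ₐ[ℚ_[p]] K) = Fintype.card (ZMod p)ˣ :=
      Fintype.card_congr e.toEquiv
    exact (Fintype.bijective_iff_injective_and_card m).mpr ⟨hminj, hcard⟩
  -- the coefficients
  let a : (K ≃ₐ[ℚ_[p]] K) → ℕ := fun σ => (PadicInt.toZMod ((ω σ : ℤ_[p]ˣ) : ℤ_[p])).val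
  have ha_lt : ∀ σ, a σ < p := fun σ => ZMod.val_lt _
  let A : ℕ → ℤ_[p] := fun k =>
    ∑ σ : K ≃ₐ[ℚ_[p]] K, ((((ω σ)⁻¹ : ℤ_[p]ˣ) : ℤ_[p])) ^ t * ((a σ).choose k : ℤ_[p])
  have htoZMod : ∀ k, PadicInt.toZMod (A k) =
      ∑ b : (ZMod p)ˣ, ((b⁻¹ : (ZMod p)ˣ) : ZMod p) ^ t * ((b : ZMod p).val.choose k : ZMod p) := by
    intro k
    have h1 : PadicInt.toZMod (A k) = ∑ σ : K ≃ₐ[ℚ_[p]] K,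
        (((m σ)⁻¹ : (ZMod p)ˣ) : ZMod p) ^ t * (((m σ : ZMod p)).val.choose k : ZMod p) := by
      rw [map_sum]
      refine Finset.sum_congr rfl fun σ _ => ?_
      rw [map_mul, map_pow, map_natCast]
      rfl
    rw [h1]
    exact Fintype.sum_bijective m hmbij _ _ (fun σ => rfl)
  have hdvd_iff : ∀ x : ℤ_[p], PadicInt.toZMod x = 0 ↔ (p : ℤ_[p]) ∣ x := by
    intro x
    rw [← RingHom.mem_ker, PadicInt.ker_toZMod, PadicInt.maximalIdeal_eq_span_p,
      Ideal.mem_span_singleton]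
  have hA_le : ∀ k, ‖A k‖ ≤ 1 := fun k => PadicInt.norm_le_one _
  have hA_lt : ∀ k, k < t → ‖A k‖ ≤ (p : ℝ)⁻¹ := by
    intro k hk
    have h0 : PadicInt.toZMod (A k) = 0 := by
      have hchar := aux_char_sum p t k ht2 hk.le
      rw [if_neg (Nat.ne_of_lt hk)] at hchar
      have hfac : ((k.factorial : ZMod p)) ≠ 0 := by
        rw [Ne, ZMod.natCast_eq_zero_iff]
        intro hdvd
        have := (Nat.Prime.dvd_factorial hpp).mp hdvd
        omega
      rw [htoZMod k]
      rcases mul_eq_zero.mp hchar with h | h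
      · exact absurd h hfac
      · exact h
    obtain ⟨c, hc⟩ := (hdvd_iff _).mp h0
    rw [hc, norm_mul, PadicInt.norm_p]
    calc (p : ℝ)⁻¹ * ‖c‖ ≤ (p : ℝ)⁻¹ * 1 :=
          mul_le_mul_of_nonneg_left (PadicInt.norm_le_one c) (by positivity)
      _ = (p : ℝ)⁻¹ := mul_one _
  have hA_t : ‖A t‖ = 1 := by
    have h0 : PadicInt.toZMod (A t) ≠ 0 := by
      rw [htoZMod t]
      intro h
      have hchar := aux_char_sum p t t ht2 le_rfl
      rw [if_pos rfl, h, mul_zero] at hchar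
      exact (neg_ne_zero.mpr (one_ne_zero (α := ZMod p))) hchar.symm
    refine le_antisymm (hA_le t) ?_
    by_contra hlt
    push_neg at hlt
    have hdvd : (p : ℤ_[p]) ∣ A t := (PadicInt.norm_lt_one_iff_dvd _).mp hlt
    exact h0 ((hdvd_iff _).mpr hdvd)
  -- binomial expansion
  have hexp : ∀ σ : K ≃ₐ[ℚ_[p]] K,
      σ ζ = ∑ k ∈ Finset.range p, ((a σ).choose k : K) * (ζ - 1) ^ k := by
    intro σ
    rw [hω σ]
    show ζ ^ (a σ) = _
    calc ζ ^ a σ = ((ζ - 1) + 1) ^ a σ := by ring_nf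
      _ = ∑ k ∈ Finset.range (a σ + 1),
            (ζ - 1) ^ k * 1 ^ (a σ - k) * ((a σ).choose k : K) := add_pow _ _ _
      _ = ∑ k ∈ Finset.range (a σ + 1), ((a σ).choose k : K) * (ζ - 1) ^ k := by
          refine Finset.sum_congr rfl fun k _ => ?_
          rw [one_pow, mul_one, mul_comm]
      _ = ∑ k ∈ Finset.range p, ((a σ).choose k : K) * (ζ - 1) ^ k := by
          apply Finset.sum_subset
          · intro x hx
            rw [Finset.mem_range] at *
            have := ha_lt σ
            omega
          · intro x hx hnx
            rw [Finset.mem_range] at hx hnx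
            push_neg at hnx
            rw [Nat.choose_eq_zero_of_lt (by omega), Nat.cast_zero, zero_mul]
  have hS : (∑ σ : K ≃ₐ[ℚ_[p]] K,
        algebraMap ℚ_[p] K (((((ω σ)⁻¹ : ℤ_[p]ˣ) : ℤ_[p]) : ℚ_[p]) ^ t) * σ ζ)
      = ∑ k ∈ Finset.range p, algebraMap ℚ_[p] K ((A k : ℚ_[p])) * (ζ - 1) ^ k := by
    have hAcast : ∀ k, ((A k : ℤ_[p]) : ℚ_[p]) = ∑ σ : K ≃ₐ[ℚ_[p]] K,
        ((((ω σ)⁻¹ : ℤ_[p]ˣ) : ℤ_[p]) : ℚ_[p]) ^ t * ((a σ).choose k : ℚ_[p]) := by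
      intro k
      rw [show ((A k : ℤ_[p]) : ℚ_[p]) = PadicInt.Coe.ringHom (A k) from rfl, map_sum]
      refine Finset.sum_congr rfl fun σ _ => ?_
      rw [map_mul, map_pow, map_natCast]
      rfl
    calc (∑ σ : K ≃ₐ[ℚ_[p]] K,
          algebraMap ℚ_[p] K (((((ω σ)⁻¹ : ℤ_[p]ˣ) : ℤ_[p]) : ℚ_[p]) ^ t) * σ ζ)
        = ∑ σ : K ≃ₐ[ℚ_[p]] K, ∑ k ∈ Finset.range p,
            algebraMap ℚ_[p] K (((((ω σ)⁻¹ : ℤ_[p]ˣ) : ℤ_[p]) : ℚ_[p]) ^ t) *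
              (((a σ).choose k : K) * (ζ - 1) ^ k) := by
          refine Finset.sum_congr rfl fun σ _ => ?_
          rw [hexp σ, Finset.mul_sum]
      _ = ∑ k ∈ Finset.range p, ∑ σ : K ≃ₐ[ℚ_[p]] K,
            algebraMap ℚ_[p] K (((((ω σ)⁻¹ : ℤ_[p]ˣ) : ℤ_[p]) : ℚ_[p]) ^ t) *
              (((a σ).choose k : K) * (ζ - 1) ^ k) := Finset.sum_comm
      _ = ∑ k ∈ Finset.range p, algebraMap ℚ_[p] K ((A k : ℚ_[p])) * (ζ - 1) ^ k := by
          refine Finset.sum_congr rfl fun k _ => ?_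
          rw [hAcast k, map_sum, Finset.sum_mul]
          refine Finset.sum_congr rfl fun σ _ => ?_
          rw [map_mul, map_pow, map_natCast]
          push_cast
          ring
  -- final norm computation
  have hnormAk : ∀ k, ‖algebraMap ℚ_[p] K ((A k : ℚ_[p]))‖ = ‖A k‖ := by
    intro k
    rw [hiso]
    exact PadicInt.norm_def.symm
  have hinv : ‖((p : K) - 1)⁻¹‖ = 1 := by
    rw [norm_inv]
    have h1 : ‖(p : K) - 1‖ = 1 := by
      rw [sub_eq_add_neg]
      rw [IsUltrametricDist.norm_add_eq_max_of_norm_ne_norm]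
      · rw [norm_neg, norm_one, hp_norm]
        apply max_eq_right
        apply inv_le_one_of_one_le₀
        exact_mod_cast (by omega : 1 ≤ p)
      · rw [norm_neg, norm_one, hp_norm]
        intro h
        have : (1:ℝ) < p := by exact_mod_cast (by omega : 1 < p)
        have := inv_lt_one_of_one_lt₀ this
        rw [h] at this
        exact lt_irrefl _ this
    rw [h1]; norm_num
  rw [norm_mul, hinv, one_mul, hS]
  have htmem : t ∈ Finset.range p := Finset.mem_range.mpr (by omega)
  rw [← Finset.sum_erase_add (Finset.range p) _ htmem]
  have hft : ‖algebraMap ℚ_[p] K ((A t : ℚ_[p])) * (ζ - 1) ^ t‖ = ‖ζ - 1‖ ^ t := by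
    rw [norm_mul, hnormAk, hA_t, one_mul, norm_pow]
  have hrest : ‖∑ k ∈ (Finset.range p).erase t,
      algebraMap ℚ_[p] K ((A k : ℚ_[p])) * (ζ - 1) ^ k‖ ≤ ‖ζ - 1‖ ^ (t + 1) := by
    apply IsUltrametricDist.norm_sum_le_of_forall_le_of_nonneg (by positivity)
    intro k hk
    rw [Finset.mem_erase, Finset.mem_range] at hk
    obtain ⟨hkt, hkp⟩ := hk
    rw [norm_mul, hnormAk, norm_pow]
    rcases Nat.lt_or_ge k t with h | h
    · calc ‖A k‖ * ‖ζ - 1‖ ^ k ≤ (p : ℝ)⁻¹ * ‖ζ - 1‖ ^ k := by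
            exact mul_le_mul_of_nonneg_right (hA_lt k h) (by positivity)
        _ = ‖ζ - 1‖ ^ (p - 1) * ‖ζ - 1‖ ^ k := by rw [hππ]
        _ = ‖ζ - 1‖ ^ (p - 1 + k) := by rw [pow_add]
        _ ≤ ‖ζ - 1‖ ^ (t + 1) := by
            apply pow_le_pow_of_le_one (norm_nonneg _) hπlt.le
            omega
    · have hkt' : t + 1 ≤ k := by omega
      calc ‖A k‖ * ‖ζ - 1‖ ^ k ≤ 1 * ‖ζ - 1‖ ^ k := by
            exact mul_le_mul_of_nonneg_right (hA_le k) (by positivity)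
        _ = ‖ζ - 1‖ ^ k := one_mul _
        _ ≤ ‖ζ - 1‖ ^ (t + 1) := pow_le_pow_of_le_one (norm_nonneg _) hπlt.le hkt'
  have hltft : ‖∑ k ∈ (Finset.range p).erase t,
      algebraMap ℚ_[p] K ((A k : ℚ_[p])) * (ζ - 1) ^ k‖
      < ‖algebraMap ℚ_[p] K ((A t : ℚ_[p])) * (ζ - 1) ^ t‖ := by
    rw [hft]
    refine lt_of_le_of_lt hrest ?_
    exact pow_lt_pow_right_of_lt_one₀ hπpos hπlt (Nat.lt_succ_self t)
  rw [IsUltrametricDist.norm_add_eq_max_of_norm_ne_norm (ne_of_lt hltft),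
    max_eq_right hltft.le, hft]
end
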